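/- Main inductive proposition (Harvey–Vondrák/Fernández–Procacci): let μ, p : P → ℝ≥0 satisfy p_x · Z_{Γ*(x)}(μ) ≤ μ_x for all x ∈ P. Define Q_S(p) = Z_S(−p). Then for any finite Λ ⊆ P, any S ⊆ Λ and any x ∈ S (writing S^c = Λ\S), one has Q_S(p) · Z_{(S\{x})^c}(μ) ≥ Q_{S\{x}}(p) · Z_{S^c}(μ). In particular Q_S(p) > 0. -/
import Mathlib


open Finset

def indepSet {P : Type*} [DecidableEq P] (W : P → P → ℕ) (S : Finset P) : Prop :=
  ∀ x ∈ S, ∀ y ∈ S, x ≠ y → W x y = 1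

instance {P : Type*} [DecidableEq P] (W : P → P → ℕ) : DecidablePred (indepSet W) :=
  fun _ => by unfold indepSet; infer_instance

/-- Polymer partition function `Z_Λ(a) = Σ_{S ⊆ Λ independent} Π_{y ∈ S} a y`. -/
def Zpart {P : Type*} [DecidableEq P] {R : Type*} [CommRing R] (W : P → P → ℕ)
    (Λ : Finset P) (a : P → R) : R :=
  ∑ S ∈ Λ.powerset.filter (indepSet W), ∏ y ∈ S, a y

/-- `Γ*(x)`: the set of polymers incompatible with `x`. -/
def Γstar {P : Type*} [Fintype P] [DecidableEq P] (W : P → P → ℕ) (x : P) : Finset P :=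
  Finset.univ.filter fun y => W x y = 0

section Basic
variable {P : Type*} [DecidableEq P]

lemma indepSet_subset {W : P → P → ℕ} {S T : Finset P} (h : S ⊆ T) (hT : indepSet W T) :
    indepSet W S := fun a ha b hb hab => hT a (h ha) b (h hb) hab

lemma Zpart_empty (W : P → P → ℕ) (a : P → ℝ) : Zpart W (∅ : Finset P) a = 1 := by
  have h2 : indepSet W (∅ : Finset P) := by intro b hb; simp at hb
  simp [Zpart, Finset.filter_singleton, h2]

lemma Zpart_nonneg (W : P → P → ℕ) (Λ : Finset P) {a : P → ℝ} (ha : ∀ y, 0 ≤ a y) :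
    0 ≤ Zpart W Λ a :=
  Finset.sum_nonneg fun S _ => Finset.prod_nonneg fun y _ => ha y

lemma one_le_Zpart (W : P → P → ℕ) (Λ : Finset P) {a : P → ℝ} (ha : ∀ y, 0 ≤ a y) :
    1 ≤ Zpart W Λ a := by
  have he : (∅ : Finset P) ∈ Λ.powerset.filter (indepSet W) := by
    simp [indepSet]
  calc (1:ℝ) = ∏ y ∈ (∅ : Finset P), a y := by simp
    _ ≤ _ := Finset.single_le_sum (f := fun S => ∏ y ∈ S, a y)
        (fun S _ => Finset.prod_nonneg fun y _ => ha y) he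

lemma Zpart_pos (W : P → P → ℕ) (Λ : Finset P) {a : P → ℝ} (ha : ∀ y, 0 ≤ a y) :
    0 < Zpart W Λ a := lt_of_lt_of_le one_pos (one_le_Zpart W Λ ha)

lemma Zpart_mono (W : P → P → ℕ) {Λ Λ' : Finset P} (h : Λ ⊆ Λ') {a : P → ℝ}
    (ha : ∀ y, 0 ≤ a y) : Zpart W Λ a ≤ Zpart W Λ' a :=
  Finset.sum_le_sum_of_subset_of_nonneg
    (Finset.filter_subset_filter _ (Finset.powerset_mono.2 h))
    (fun S _ _ => Finset.prod_nonneg fun y _ => ha y)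

lemma Zpart_submul (W : P → P → ℕ) (A B : Finset P) {a : P → ℝ} (ha : ∀ y, 0 ≤ a y) :
    Zpart W (A ∪ B) a ≤ Zpart W A a * Zpart W B a := by
  classical
  rw [Zpart, Zpart, Zpart, Finset.sum_mul_sum, ← Finset.sum_product']
  set X := (A ∪ B).powerset.filter (indepSet W) with hX
  have key : ∑ T ∈ X, ∏ y ∈ T, a y
      = ∑ q ∈ X.image (fun T => (T.filter (· ∈ A), T.filter (· ∉ A))),
          (∏ y ∈ q.1, a y) * ∏ y ∈ q.2, a y := by
    rw [Finset.sum_image]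
    · apply Finset.sum_congr rfl
      intro T _
      exact (Finset.prod_filter_mul_prod_filter_not T (· ∈ A) a).symm
    · intro T hT T' hT' h
      have h1 := congrArg Prod.fst h
      have h2 := congrArg Prod.snd h
      simp only at h1 h2
      have : T.filter (· ∈ A) ∪ T.filter (· ∉ A) = T'.filter (· ∈ A) ∪ T'.filter (· ∉ A) := by
        rw [h1, h2]
      rwa [Finset.filter_union_filter_not_eq, Finset.filter_union_filter_not_eq] at this
  rw [key]
  apply Finset.sum_le_sum_of_subset_of_nonneg
  · intro q hq
    simp only [Finset.mem_image] at hq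
    obtain ⟨T, hT, rfl⟩ := hq
    simp only [hX, Finset.mem_filter, Finset.mem_powerset] at hT
    simp only [Finset.mem_product, Finset.mem_filter, Finset.mem_powerset]
    refine ⟨⟨fun y hy => ?_, indepSet_subset (Finset.filter_subset _ _) hT.2⟩,
      fun y hy => ?_, indepSet_subset (Finset.filter_subset _ _) hT.2⟩
    · exact (Finset.mem_filter.1 hy).2
    · have hy' := Finset.mem_filter.1 hy
      rcases Finset.mem_union.1 (hT.1 hy'.1) with h | h
      · exact absurd h hy'.2
      · exact h
  · intro q _ _
    exact mul_nonneg (Finset.prod_nonneg fun y _ => ha y) (Finset.prod_nonneg fun y _ => ha y)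

end Basic

lemma Zpart_delete {P : Type*} [Fintype P] [DecidableEq P] (W : P → P → ℕ)
    (hsym : ∀ x y, W x y = W y x) (hdiag : ∀ x, W x x = 0)
    (h01 : ∀ x y, W x y = 0 ∨ W x y = 1)
    (Λ : Finset P) (a : P → ℝ) (x : P) (hx : x ∈ Λ) :
    Zpart W Λ a = Zpart W (Λ.erase x) a + a x * Zpart W (Λ \ Γstar W x) a := by
  classical
  have hxG : x ∈ Γstar W x := by simp [Γstar, hdiag]
  rw [Zpart, ← Finset.sum_filter_add_sum_filter_not (Λ.powerset.filter (indepSet W))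
    (fun T => x ∉ T)]
  congr 1
  · -- x ∉ T part
    rw [Zpart]
    apply Finset.sum_congr _ (fun _ _ => rfl)
    ext T
    simp only [Finset.mem_filter, Finset.mem_powerset, Finset.subset_erase]
    tauto
  · -- x ∈ T part
    rw [Zpart, Finset.mul_sum]
    refine Finset.sum_bij' (fun T _ => T.erase x) (fun U _ => insert x U) ?_ ?_ ?_ ?_ ?_
    · intro T hT
      simp only [Finset.mem_filter, Finset.mem_powerset, not_not] at hT
      obtain ⟨⟨hTΛ, hTi⟩, hxT⟩ := hT
      simp only [Finset.mem_filter, Finset.mem_powerset]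
      refine ⟨fun y hy => ?_, indepSet_subset (Finset.erase_subset _ _) hTi⟩
      have hyT := Finset.mem_of_mem_erase hy
      have hyx := Finset.ne_of_mem_erase hy
      rw [Finset.mem_sdiff]
      refine ⟨hTΛ hyT, ?_⟩
      simp only [Γstar, Finset.mem_filter, Finset.mem_univ, true_and]
      rw [hTi x hxT y hyT (Ne.symm hyx)]
      exact one_ne_zero
    · intro U hU
      simp only [Finset.mem_filter, Finset.mem_powerset] at hU
      obtain ⟨hUΛ, hUi⟩ := hU
      have hxU : x ∉ U := fun h => by
        have := hUΛ h
        rw [Finset.mem_sdiff] at this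
        exact this.2 hxG
      simp only [Finset.mem_filter, Finset.mem_powerset, not_not]
      refine ⟨⟨?_, ?_⟩, Finset.mem_insert_self _ _⟩
      · intro y hy
        rcases Finset.mem_insert.1 hy with rfl | hy
        · exact hx
        · exact (Finset.mem_sdiff.1 (hUΛ hy)).1
      · intro y hy z hz hyz
        have hWy : ∀ u ∈ U, W x u = 1 := by
          intro u hu
          have : u ∉ Γstar W x := (Finset.mem_sdiff.1 (hUΛ hu)).2
          simp only [Γstar, Finset.mem_filter, Finset.mem_univ, true_and] at this
          rcases h01 x u with h | h
          · exact absurd h this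
          · exact h
        rcases Finset.mem_insert.1 hy with hy1 | hy1
        · rcases Finset.mem_insert.1 hz with hz1 | hz1
          · exact absurd (hy1.trans hz1.symm) hyz
          · rw [hy1]; exact hWy z hz1
        · rcases Finset.mem_insert.1 hz with hz1 | hz1
          · rw [hz1, hsym]; exact hWy y hy1
          · exact hUi y hy1 z hz1 hyz
    · intro T hT
      simp only [Finset.mem_filter, not_not] at hT
      exact Finset.insert_erase hT.2
    · intro U hU
      simp only [Finset.mem_filter, Finset.mem_powerset] at hU
      have hxU : x ∉ U := fun h => by
        have := hU.1 h
        rw [Finset.mem_sdiff] at this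
        exact this.2 hxG
      exact Finset.erase_insert hxU
    · intro T hT
      simp only [Finset.mem_filter, not_not] at hT
      exact (Finset.mul_prod_erase T a hT.2).symm

lemma fp_tele {P : Type*} [Fintype P] [DecidableEq P] (W : P → P → ℕ)
    (μ p : P → ℝ) (hμ : ∀ x, 0 ≤ μ x) :
    ∀ m (A S Λ : Finset P), A.card ≤ m → A ⊆ S → S ⊆ Λ →
      (∀ T ⊆ S, 0 < Zpart W T (fun y => -p y) ∧
        ∀ Λ', T ⊆ Λ' → ∀ x ∈ T,
          Zpart W (T.erase x) (fun y => -p y) * Zpart W (Λ' \ T) μ ≤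
            Zpart W T (fun y => -p y) * Zpart W (Λ' \ T.erase x) μ) →
      Zpart W (S \ A) (fun y => -p y) * Zpart W (Λ \ S) μ ≤
        Zpart W S (fun y => -p y) * Zpart W (Λ \ (S \ A)) μ := by
  intro m
  induction m with
  | zero =>
    intro A S Λ hA _ _ _
    have : A = ∅ := Finset.card_eq_zero.1 (Nat.le_zero.1 hA)
    subst this
    simp
  | succ m ih =>
    intro A S Λ hA hAS hSΛ hind
    rcases A.eq_empty_or_nonempty with rfl | ⟨y, hy⟩
    · simp
    · have hyS : y ∈ S := hAS hy
      have hA' : (A.erase y).card ≤ m := by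
        have h1 := Finset.card_erase_of_mem hy
        have h2 : 0 < A.card := Finset.card_pos.2 ⟨y, hy⟩
        omega
      have hA'sub : A.erase y ⊆ S.erase y := fun z hz => by
        have hz' := Finset.mem_erase.1 hz
        exact Finset.mem_erase.2 ⟨hz'.1, hAS hz'.2⟩
      have hSy : S.erase y ⊆ Λ := (Finset.erase_subset _ _).trans hSΛ
      have hind' : ∀ T ⊆ S.erase y, _ := fun T hT =>
        hind T (hT.trans (Finset.erase_subset _ _))
      have key1 := ih (A.erase y) (S.erase y) Λ hA' hA'sub hSy hind'
      have hEq : (S.erase y) \ (A.erase y) = S \ A := by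
        ext z
        by_cases hzy : z = y
        · subst hzy; simp [hy]
        · simp [Finset.mem_sdiff, Finset.mem_erase, hzy]
      rw [hEq] at key1
      have key2 := (hind S (Finset.Subset.refl S)).2 Λ hSΛ y hyS
      have hQsa : 0 < Zpart W (S \ A) (fun y => -p y) :=
        (hind (S \ A) Finset.sdiff_subset).1
      have hQS : 0 < Zpart W S (fun y => -p y) := (hind S (Finset.Subset.refl S)).1
      have hQy : 0 < Zpart W (S.erase y) (fun y => -p y) :=
        (hind _ (Finset.erase_subset _ _)).1
      have hZy : 0 < Zpart W (Λ \ S.erase y) μ := Zpart_pos W _ hμ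
      have hZs : 0 ≤ Zpart W (Λ \ S) μ := Zpart_nonneg W _ hμ
      have hZsa : 0 ≤ Zpart W (Λ \ (S \ A)) μ := Zpart_nonneg W _ hμ
      have h3 : Zpart W (S \ A) (fun y => -p y) * Zpart W (Λ \ S) μ * Zpart W (Λ \ S.erase y) μ ≤
          Zpart W S (fun y => -p y) * Zpart W (Λ \ (S \ A)) μ * Zpart W (Λ \ S.erase y) μ := by
        nlinarith [mul_le_mul_of_nonneg_right key1 hZs, mul_le_mul_of_nonneg_right key2 hZsa]
      exact le_of_mul_le_mul_right h3 hZy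

theorem fp_main_inductive_prop {P : Type*} [Fintype P] [DecidableEq P] (W : P → P → ℕ)
    (hsym : ∀ x y, W x y = W y x) (hdiag : ∀ x, W x x = 0)
    (h01 : ∀ x y, W x y = 0 ∨ W x y = 1)
    (μ p : P → ℝ) (hμ : ∀ x, 0 ≤ μ x) (hp : ∀ x, 0 ≤ p x)
    (hFP : ∀ x, p x * Zpart W (Γstar W x) μ ≤ μ x)
    (Λ S : Finset P) (hS : S ⊆ Λ) (x : P) (hx : x ∈ S) :
    0 < Zpart W S (fun y => -p y) ∧
      Zpart W (S.erase x) (fun y => -p y) * Zpart W (Λ \ S) μ ≤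
        Zpart W S (fun y => -p y) * Zpart W (Λ \ S.erase x) μ := by
  classical
  suffices H : ∀ n (S : Finset P), S.card ≤ n →
      0 < Zpart W S (fun y => -p y) ∧
        ∀ Λ', S ⊆ Λ' → ∀ x ∈ S,
          Zpart W (S.erase x) (fun y => -p y) * Zpart W (Λ' \ S) μ ≤
            Zpart W S (fun y => -p y) * Zpart W (Λ' \ S.erase x) μ by
    obtain ⟨h1, h2⟩ := H S.card S le_rfl
    exact ⟨h1, h2 Λ hS x hx⟩
  intro n
  induction n with
  | zero =>
    intro S hScard
    have hSe : S = ∅ := Finset.card_eq_zero.1 (Nat.le_zero.1 hScard)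
    subst hSe
    refine ⟨by rw [Zpart_empty]; norm_num, ?_⟩
    intro Λ' _ x hx
    simp at hx
  | succ n ih =>
    intro S hScard
    by_cases hc : S.card ≤ n
    · exact ih S hc
    · have hcard : S.card = n + 1 := le_antisymm hScard (not_le.1 hc)
      have hineq : ∀ Λ', S ⊆ Λ' → ∀ x ∈ S,
          Zpart W (S.erase x) (fun y => -p y) * Zpart W (Λ' \ S) μ ≤
            Zpart W S (fun y => -p y) * Zpart W (Λ' \ S.erase x) μ := by
        intro Λ' hSΛ x hxS
        set G := Γstar W x with hG
        have hxG : x ∈ G := by simp [hG, Γstar, hdiag]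
        have hcx : (S.erase x).card = n := by
          rw [Finset.card_erase_of_mem hxS, hcard]; omega
        -- deletion identities
        have hQdel : Zpart W S (fun y => -p y) =
            Zpart W (S.erase x) (fun y => -p y) + (-p x) * Zpart W (S \ G) (fun y => -p y) := by
          simpa using Zpart_delete W hsym hdiag h01 S (fun y => -p y) x hxS
        have hxΛS : x ∈ Λ' \ S.erase x :=
          Finset.mem_sdiff.2 ⟨hSΛ hxS, fun h => (Finset.mem_erase.1 h).1 rfl⟩
        have e1 : (Λ' \ S.erase x).erase x = Λ' \ S := by
          ext z
          by_cases hzx : z = x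
          · subst hzx; simp [hxS]
          · simp [Finset.mem_erase, Finset.mem_sdiff, hzx]
        have e2 : (Λ' \ S.erase x) \ G = (Λ' \ S) \ G := by
          ext z
          by_cases hzx : z = x
          · subst hzx; simp [hxG]
          · simp [Finset.mem_sdiff, Finset.mem_erase, hzx]
        have hZdel : Zpart W (Λ' \ S.erase x) μ =
            Zpart W (Λ' \ S) μ + μ x * Zpart W ((Λ' \ S) \ G) μ := by
          have := Zpart_delete W hsym hdiag h01 (Λ' \ S.erase x) μ x hxΛS
          rwa [e1, ← hG, e2] at this
        -- telescoping on Λ'' = Λ' ∪ G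
        have hind' : ∀ T ⊆ S.erase x, 0 < Zpart W T (fun y => -p y) ∧
            ∀ Λ₀, T ⊆ Λ₀ → ∀ z ∈ T,
              Zpart W (T.erase z) (fun y => -p y) * Zpart W (Λ₀ \ T) μ ≤
                Zpart W T (fun y => -p y) * Zpart W (Λ₀ \ T.erase z) μ := by
          intro T hT
          exact ih T (by rw [← hcx]; exact Finset.card_le_card hT)
        have hsub2 : S.erase x ⊆ Λ' ∪ G :=
          ((Finset.erase_subset _ _).trans hSΛ).trans Finset.subset_union_left
        have key := fp_tele W μ p hμ ((S.erase x) ∩ G).card ((S.erase x) ∩ G)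
          (S.erase x) (Λ' ∪ G) le_rfl Finset.inter_subset_left hsub2 hind'
        have e3 : (S.erase x) \ ((S.erase x) ∩ G) = S \ G := by
          ext z
          by_cases hzx : z = x
          · subst hzx; simp [hxG]
          · simp [Finset.mem_sdiff, Finset.mem_erase, Finset.mem_inter, hzx]
            tauto
        rw [e3] at key
        have e4 : (Λ' ∪ G) \ (S \ G) ⊆ G ∪ ((Λ' \ S) \ G) := by
          intro z hz
          rw [Finset.mem_sdiff, Finset.mem_union] at hz
          rw [Finset.mem_union, Finset.mem_sdiff, Finset.mem_sdiff]
          by_cases hzG : z ∈ G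
          · exact Or.inl hzG
          · rcases hz.1 with h | h
            · refine Or.inr ⟨⟨h, fun hzS => ?_⟩, hzG⟩
              exact hz.2 (Finset.mem_sdiff.2 ⟨hzS, hzG⟩)
            · exact absurd h hzG
        -- positivity facts
        have hQG : 0 < Zpart W (S \ G) (fun y => -p y) := by
          refine (ih (S \ G) ?_).1
          rw [← hcx]
          refine Finset.card_le_card fun z hz => ?_
          have hz' := Finset.mem_sdiff.1 hz
          exact Finset.mem_erase.2 ⟨fun h => hz'.2 (h ▸ hxG), hz'.1⟩
        have hQx : 0 < Zpart W (S.erase x) (fun y => -p y) := (ih _ hcx.le).1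
        have hZZ : 0 ≤ Zpart W ((Λ' \ S) \ G) μ := Zpart_nonneg W _ hμ
        have hZG : 0 ≤ Zpart W G μ := Zpart_nonneg W _ hμ
        -- chain
        have hmono1 : Zpart W (Λ' \ S.erase x) μ ≤ Zpart W ((Λ' ∪ G) \ S.erase x) μ :=
          Zpart_mono W (Finset.sdiff_subset_sdiff Finset.subset_union_left
            (Finset.Subset.refl _)) hμ
        have hmono2 : Zpart W ((Λ' ∪ G) \ (S \ G)) μ ≤ Zpart W (G ∪ ((Λ' \ S) \ G)) μ :=
          Zpart_mono W e4 hμ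
        have hsubm : Zpart W (G ∪ ((Λ' \ S) \ G)) μ ≤
            Zpart W G μ * Zpart W ((Λ' \ S) \ G) μ := Zpart_submul W _ _ hμ
        have chain : Zpart W (S \ G) (fun y => -p y) * Zpart W (Λ' \ S.erase x) μ ≤
            Zpart W (S.erase x) (fun y => -p y) *
              (Zpart W G μ * Zpart W ((Λ' \ S) \ G) μ) := by
          calc Zpart W (S \ G) (fun y => -p y) * Zpart W (Λ' \ S.erase x) μ
              ≤ Zpart W (S \ G) (fun y => -p y) * Zpart W ((Λ' ∪ G) \ S.erase x) μ :=
                mul_le_mul_of_nonneg_left hmono1 hQG.le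
            _ ≤ Zpart W (S.erase x) (fun y => -p y) * Zpart W ((Λ' ∪ G) \ (S \ G)) μ := key
            _ ≤ Zpart W (S.erase x) (fun y => -p y) *
                  (Zpart W G μ * Zpart W ((Λ' \ S) \ G) μ) :=
                mul_le_mul_of_nonneg_left (hmono2.trans hsubm) hQx.le
        have keyfinal : p x * (Zpart W (S \ G) (fun y => -p y) * Zpart W (Λ' \ S.erase x) μ) ≤
            μ x * (Zpart W (S.erase x) (fun y => -p y) * Zpart W ((Λ' \ S) \ G) μ) := by
          have k1 := mul_le_mul_of_nonneg_left chain (hp x)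
          have k3 : (p x * Zpart W G μ) *
                (Zpart W (S.erase x) (fun y => -p y) * Zpart W ((Λ' \ S) \ G) μ) ≤
              μ x * (Zpart W (S.erase x) (fun y => -p y) * Zpart W ((Λ' \ S) \ G) μ) :=
            mul_le_mul_of_nonneg_right (hG ▸ hFP x) (mul_nonneg hQx.le hZZ)
          nlinarith [k1, k3]
        rw [hQdel, hZdel]
        rw [hZdel] at keyfinal
        nlinarith [keyfinal]
      refine ⟨?_, hineq⟩
      -- positivity
      have hne : S.Nonempty := Finset.card_pos.1 (by omega)
      obtain ⟨x0, hx0⟩ := hne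
      have h1 := hineq S (Finset.Subset.refl S) x0 hx0
      rw [Finset.sdiff_self, Zpart_empty, mul_one] at h1
      have hQx0 : 0 < Zpart W (S.erase x0) (fun y => -p y) :=
        (ih _ (by rw [Finset.card_erase_of_mem hx0, hcard]; omega)).1
      have hZpos : 0 < Zpart W (S \ S.erase x0) μ := Zpart_pos W _ hμ
      nlinarith [h1, hQx0, hZpos]
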